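/- Let α, β > 0, A, B > 0, a', b', c', d' ≥ 0, ψ(x) = (A+x)^α, φ(x) = (B+x)^β, Λ(u_a,u_b,v) = φ(b'u_b + d'v) + ψ(a'u_a + c'v), Q = (φ(b'u_b+d'v)u_b - ψ(a'u_a+c'v)u_a)/Λ. Then for every M > 0 and all (u_a,u_b,v) ∈ [0,M]³: ∂₁Q(u_a,u_b,v) < 0 and |∂₁Q(u_a,u_b,v)| ≤ 1 + α + a' M α / A. -/

import Mathlib

open Real

set_option maxHeartbeats 1000000 in
theorem partial1Q_bounds (α β A B a' b' c' d' : ℝ)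
    (hα : 0 < α) (hβ : 0 < β) (hA : 0 < A) (hB : 0 < B)
    (ha' : 0 ≤ a') (hb' : 0 ≤ b') (hc' : 0 ≤ c') (hd' : 0 ≤ d')
    (Q : ℝ → ℝ → ℝ → ℝ)
    (hQ : ∀ u_a u_b v, Q u_a u_b v =
      ((B + (b' * u_b + d' * v)) ^ β * u_b - (A + (a' * u_a + c' * v)) ^ α * u_a) /
        ((B + (b' * u_b + d' * v)) ^ β + (A + (a' * u_a + c' * v)) ^ α)) :
    ∀ M : ℝ, 0 < M → ∀ u_a u_b v : ℝ,
      u_a ∈ Set.Icc 0 M → u_b ∈ Set.Icc 0 M → v ∈ Set.Icc 0 M →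
      deriv (fun t => Q t u_b v) u_a < 0 ∧
      |deriv (fun t => Q t u_b v) u_a| ≤ 1 + α + a' * M * α / A := by
  intro M hM u_a u_b v hua hub hv
  obtain ⟨hua0, huaM⟩ := hua
  obtain ⟨hub0, hubM⟩ := hub
  obtain ⟨hv0, hvM⟩ := hv
  have hx0 : 0 ≤ a' * u_a + c' * v := by positivity
  have hAx : 0 < A + (a' * u_a + c' * v) := by linarith
  have hy0 : 0 ≤ b' * u_b + d' * v := by positivity
  have hBy : 0 < B + (b' * u_b + d' * v) := by linarith
  set P : ℝ := (A + (a' * u_a + c' * v)) ^ α with hPdef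
  set G : ℝ := (B + (b' * u_b + d' * v)) ^ β with hGdef
  have hPpos : 0 < P := rpow_pos_of_pos hAx α
  have hGpos : 0 < G := rpow_pos_of_pos hBy β
  have hDpos : 0 < G + P := by linarith
  set s : ℝ := α * (A + (a' * u_a + c' * v)) ^ (α - 1) * a' with hsdef
  have hs0 : 0 ≤ s := by
    have := (rpow_pos_of_pos hAx (α - 1)).le
    positivity
  have hsAx : s * (A + (a' * u_a + c' * v)) = α * P * a' := by
    rw [hsdef, hPdef, Real.rpow_sub_one hAx.ne' α]
    field_simp
  -- derivative of inner linear map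
  have hlin : HasDerivAt (fun t => A + (a' * t + c' * v)) a' u_a := by
    have h1 : HasDerivAt (fun t : ℝ => a' * t + c' * v) a' u_a := by
      simpa using ((hasDerivAt_id u_a).const_mul a').add_const (c' * v)
    simpa using h1.const_add A
  have hf : HasDerivAt (fun t => (A + (a' * t + c' * v)) ^ α) s u_a := by
    have h1 := (Real.hasDerivAt_rpow_const (x := A + (a' * u_a + c' * v)) (p := α)
      (Or.inl hAx.ne')).comp u_a hlin
    simpa [hsdef, Function.comp_def, mul_assoc] using h1
  have hN : HasDerivAt (fun t => G * u_b - (A + (a' * t + c' * v)) ^ α * t)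
      (0 - (s * u_a + P * 1)) u_a :=
    (hasDerivAt_const u_a (G * u_b)).sub (hf.mul (hasDerivAt_id u_a))
  have hDen : HasDerivAt (fun t => G + (A + (a' * t + c' * v)) ^ α) s u_a :=
    hf.const_add G
  have hdiv := hN.div hDen (by positivity : G + P ≠ 0)
  have hfun : (fun t => Q t u_b v) =
      (fun t => (G * u_b - (A + (a' * t + c' * v)) ^ α * t) /
        (G + (A + (a' * t + c' * v)) ^ α)) := by
    funext t
    rw [hQ]
  have hQd : HasDerivAt (fun t => Q t u_b v)
      (((0 - (s * u_a + P * 1)) * (G + P) - (G * u_b - P * u_a) * s) / (G + P) ^ 2) u_a := by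
    rw [hfun]; exact hdiv
  have hderiv := hQd.deriv
  rw [hderiv]
  have hnum : (0 - (s * u_a + P * 1)) * (G + P) - (G * u_b - P * u_a) * s
      = -(P * (G + P) + s * G * (u_a + u_b)) := by ring
  have hnumneg : (0 - (s * u_a + P * 1)) * (G + P) - (G * u_b - P * u_a) * s < 0 := by
    rw [hnum]
    have h1 : 0 ≤ s * G * (u_a + u_b) := by positivity
    nlinarith [mul_pos hPpos hDpos]
  have hneg : ((0 - (s * u_a + P * 1)) * (G + P) - (G * u_b - P * u_a) * s) / (G + P) ^ 2 < 0 :=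
    div_neg_of_neg_of_pos hnumneg (by positivity)
  refine ⟨hneg, ?_⟩
  rw [abs_of_neg hneg, ← neg_div, div_le_iff₀ (by positivity : (0:ℝ) < (G + P) ^ 2)]
  rw [hnum, neg_neg]
  have hC3 : 0 ≤ a' * M * α / A := by positivity
  have hC3A : a' * M * α / A * A = a' * M * α := by field_simp
  have haua : a' * u_a ≤ A + (a' * u_a + c' * v) := by nlinarith [mul_nonneg hc' hv0]
  have h2' : s * u_a ≤ α * P := by
    have e : s * u_a * (A + (a' * u_a + c' * v)) = α * P * (a' * u_a) := by
      linear_combination u_a * hsAx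
    have h := mul_le_mul_of_nonneg_left haua (by positivity : (0:ℝ) ≤ α * P)
    rw [← e] at h
    exact le_of_mul_le_mul_right h hAx
  have h3' : s * u_b ≤ a' * M * α / A * P := by
    have e : s * u_b * (A + (a' * u_a + c' * v)) = α * P * (a' * u_b) := by
      linear_combination u_b * hsAx
    have step : α * P * (a' * u_b) ≤ a' * M * α / A * P * (A + (a' * u_a + c' * v)) := by
      have step1 : α * P * a' * u_b ≤ α * P * a' * M :=
        mul_le_mul_of_nonneg_left hubM (show (0:ℝ) ≤ α * P * a' by positivity)
      have step2 : α * P * a' * M = a' * M * α / A * A * P := by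
        linear_combination (-P) * hC3A
      have step3 : a' * M * α / A * A * P ≤ a' * M * α / A * (A + (a' * u_a + c' * v)) * P := by
        nlinarith [mul_nonneg (mul_nonneg hC3 hPpos.le) hx0]
      nlinarith [step1, step2, step3]
    have h : s * u_b * (A + (a' * u_a + c' * v)) ≤
        a' * M * α / A * P * (A + (a' * u_a + c' * v)) := by rw [e]; exact step
    exact le_of_mul_le_mul_right h hAx
  nlinarith [mul_le_mul_of_nonneg_left h2' hGpos.le, mul_le_mul_of_nonneg_left h3' hGpos.le,
    mul_nonneg hα.le (sq_nonneg G), mul_nonneg hα.le (sq_nonneg P),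
    mul_nonneg hα.le (mul_pos hGpos hPpos).le,
    mul_nonneg hC3 (sq_nonneg G), mul_nonneg hC3 (sq_nonneg P),
    mul_nonneg hC3 (mul_pos hGpos hPpos).le,
    mul_pos hGpos hDpos]
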